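/- Under the S_R exchange relations, let M ∈ M_N(ℂ) be a constant matrix with M² = I and set t̃_M(k) = tr(M·b(k)) = Σ_{i,j} M_{ji} b_{ij}(k). Then for all real k₁ ≠ ±k₂, [t̃_M(k₁), t̃_M(k₂)] = 0 in A. -/

import Mathlib

open Matrix

section Aux
set_option linter.unusedSectionVars false
variable {N : ℕ} {A : Type*} [Ring A] [Algebra ℂ A]

private lemma pair_sum_eq (g : Fin N → Fin N → Fin N → Fin N → A) :
    ∑ i, ∑ j, ∑ k, ∑ l, g i j k l
      = ∑ p : Fin N × Fin N, ∑ q : Fin N × Fin N, g p.1 p.2 q.1 q.2 := by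
  simp [Fintype.sum_prod_type]

private lemma sum4_swap (f : Fin N → Fin N → Fin N → Fin N → A) :
    ∑ i, ∑ j, ∑ k, ∑ l, f i j k l = ∑ i, ∑ j, ∑ k, ∑ l, f k l i j := by
  rw [pair_sum_eq f, pair_sum_eq (fun i j k l => f k l i j)]
  exact Finset.sum_comm

private lemma sum3_rot (f : Fin N → Fin N → Fin N → A) :
    ∑ i, ∑ j, ∑ k, f i j k = ∑ j, ∑ k, ∑ i, f i j k := by
  rw [Finset.sum_comm]
  exact Finset.sum_congr rfl fun _ _ => Finset.sum_comm

private lemma sum4_congr {f h : Fin N → Fin N → Fin N → Fin N → A}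
    (hfh : ∀ i j k l, f i j k l = h i j k l) :
    ∑ i, ∑ j, ∑ k, ∑ l, f i j k l = ∑ i, ∑ j, ∑ k, ∑ l, h i j k l := by
  simp only [hfh]

private lemma sum4_factor (c d : Fin N → Fin N → ℂ) (x y : Fin N → Fin N → A) :
    (∑ i, ∑ j, c i j • x i j) * (∑ k, ∑ l, d k l • y k l)
      = ∑ i, ∑ j, ∑ k, ∑ l, (c i j * d k l) • (x i j * y k l) := by
  have h1 : (∑ i, ∑ j, c i j • x i j) * (∑ k, ∑ l, d k l • y k l)
      = ∑ i, ∑ j, ∑ k, ∑ l, d i j • c k l • (x k l * y i j) := by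
    simp only [Finset.sum_mul, Finset.mul_sum, smul_mul_assoc, mul_smul_comm,
      Finset.smul_sum]
  rw [h1, sum4_swap (fun i j k l => d i j • c k l • (x k l * y i j))]
  exact Finset.sum_congr rfl fun i _ => Finset.sum_congr rfl fun j _ =>
    Finset.sum_congr rfl fun k _ => Finset.sum_congr rfl fun l _ => by
      rw [smul_comm, smul_smul]

private lemma sum4_factor' (c d : Fin N → Fin N → ℂ) (x y : Fin N → Fin N → A) :
    (∑ i, ∑ j, c i j • x i j) * (∑ k, ∑ l, d k l • y k l)
      = ∑ i, ∑ j, ∑ k, ∑ l, (d i j * c k l) • (x k l * y i j) := by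
  simp only [Finset.sum_mul, Finset.mul_sum, smul_mul_assoc, mul_smul_comm,
    Finset.smul_sum]
  exact sum4_congr fun i j k l => smul_smul _ _ _

private lemma mulMdelta (M : Matrix (Fin N) (Fin N) ℂ) (hM : M * M = 1) (j k : Fin N) :
    (∑ i, M j i * M i k) = if j = k then (1:ℂ) else 0 := by
  rw [← Matrix.mul_apply, hM, Matrix.one_apply]

private lemma deltaA (M : Matrix (Fin N) (Fin N) ℂ) (hM : M * M = 1)
    (f : Fin N → Fin N → A) :
    (∑ i, ∑ j, ∑ k, ∑ l, (M j i * M l k) • (if i = l then f k j else 0))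
      = ∑ j, f j j := by
  simp only [smul_ite, smul_zero, Finset.sum_ite_eq, Finset.mem_univ, if_true]
  rw [sum3_rot]
  have h : ∀ j k : Fin N, (∑ i, (M j i * M i k) • f k j)
      = (if j = k then (1:ℂ) else 0) • f k j := by
    intro j k; rw [← Finset.sum_smul, mulMdelta M hM]
  simp only [h, ite_smul, one_smul, zero_smul, Finset.sum_ite_eq, Finset.mem_univ,
    if_true]

private lemma deltaB (M : Matrix (Fin N) (Fin N) ℂ) (hM : M * M = 1)
    (f : Fin N → Fin N → A) :
    (∑ i, ∑ j, ∑ k, ∑ l, (M j i * M l k) • (if k = j then f i l else 0))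
      = ∑ i, f i i := by
  have h1 : ∀ i j : Fin N, (∑ k, ∑ l, (M j i * M l k) • (if k = j then f i l else 0))
      = ∑ l, (M j i * M l j) • f i l := by
    intro i j
    rw [Finset.sum_comm]
    simp only [smul_ite, smul_zero, Finset.sum_ite_eq', Finset.mem_univ, if_true]
  simp only [h1]
  have h2 : ∀ i : Fin N, (∑ j, ∑ l, (M j i * M l j) • f i l)
      = ∑ l, (if l = i then (1:ℂ) else 0) • f i l := by
    intro i
    rw [Finset.sum_comm]
    refine Finset.sum_congr rfl fun l _ => ?_
    rw [← Finset.sum_smul, show (∑ j, M j i * M l j) = ∑ j, M l j * M j i from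
      Finset.sum_congr rfl fun j _ => mul_comm _ _, mulMdelta M hM]
  simp only [h2, ite_smul, one_smul, zero_smul, Finset.sum_ite_eq', Finset.mem_univ,
    if_true]

private lemma deltaC (M : Matrix (Fin N) (Fin N) ℂ) (f : Fin N → Fin N → A) :
    (∑ i, ∑ j, ∑ k, ∑ l, (M j i * M l k) • (if i = j then f k l else 0))
      = (∑ i, M i i) • (∑ k, ∑ l, M l k • f k l) := by
  have h1 : ∀ i : Fin N, (∑ j, ∑ k, ∑ l, (M j i * M l k) • (if i = j then f k l else 0))
      = M i i • (∑ k, ∑ l, M l k • f k l) := by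
    intro i
    have h : ∀ j : Fin N, (∑ k, ∑ l, (M j i * M l k) • (if i = j then f k l else 0))
        = if i = j then ∑ k, ∑ l, (M j i * M l k) • f k l else 0 := by
      intro j; split <;> simp
    simp only [h, Finset.sum_ite_eq, Finset.mem_univ, if_true]
    simp only [Finset.smul_sum, mul_smul]
  simp only [h1]
  exact (Finset.sum_smul).symm

private lemma deltaD (M : Matrix (Fin N) (Fin N) ℂ) (f : Fin N → Fin N → A) :
    (∑ i, ∑ j, ∑ k, ∑ l, (M j i * M l k) • (if k = l then f i j else 0))
      = (∑ k, M k k) • (∑ i, ∑ j, M j i • f i j) := by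
  simp only [smul_ite, smul_zero, Finset.sum_ite_eq, Finset.mem_univ, if_true]
  have h1 : ∀ i j : Fin N, (∑ k, (M j i * M k k) • f i j)
      = (∑ k, M k k) • (M j i • f i j) := by
    intro i j
    rw [← Finset.sum_smul, smul_smul]
    congr 1
    rw [Finset.sum_mul]
    exact Finset.sum_congr rfl fun k _ => mul_comm _ _
  simp only [h1]
  simp only [← Finset.smul_sum]

end Aux

set_option maxHeartbeats 16000000 in
/-- Under the S_R exchange relations, for a constant matrix `M` with `M² = I`,
the elements `t̃_M(k) = tr(M b(k))` commute: `[t̃_M(k₁), t̃_M(k₂)] = 0`. -/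
theorem tM_commute (N : ℕ) (hN : 1 ≤ N) (g : ℝ) (hg : 0 < g)
    (A : Type*) [Ring A] [Algebra ℂ A]
    (b : ℝ → Fin N → Fin N → A)
    (hSR : ∀ k₁ k₂ : ℝ, k₁ ≠ k₂ → k₁ ≠ -k₂ → ∀ i j k l : Fin N,
      b k₁ i j * b k₂ k l - b k₂ k l * b k₁ i j =
        ((Complex.I * (g : ℂ)) / ((k₁ : ℂ) - (k₂ : ℂ))) •
            (b k₂ k j * b k₁ i l - b k₁ k j * b k₂ i l)
        + ((Complex.I * (g : ℂ)) / ((k₁ : ℂ) + (k₂ : ℂ))) •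
            ((if i = l then ∑ a : Fin N, b k₂ k a * b k₁ a j else 0)
              - (if k = j then ∑ a : Fin N, b k₁ i a * b k₂ a l else 0))
        - (((g : ℂ) ^ 2) / ((k₁ : ℂ) ^ 2 - (k₂ : ℂ) ^ 2)) •
            (if i = j then
              ∑ a : Fin N, (b k₂ k a * b k₁ a l - b k₁ k a * b k₂ a l)
             else 0))
    (M : Matrix (Fin N) (Fin N) ℂ) (hM : M * M = 1) :
    ∀ k₁ k₂ : ℝ, k₁ ≠ k₂ → k₁ ≠ -k₂ →
      (∑ p : Fin N, ∑ q : Fin N, M q p • b k₁ p q) *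
          (∑ p : Fin N, ∑ q : Fin N, M q p • b k₂ p q)
        - (∑ p : Fin N, ∑ q : Fin N, M q p • b k₂ p q) *
            (∑ p : Fin N, ∑ q : Fin N, M q p • b k₁ p q) = 0 := by
  intro k₁ k₂ h1 h2
  have key := hSR k₁ k₂ h1 h2
  -- scalar facts
  have hδ : ((k₁:ℂ) - (k₂:ℂ)) ≠ 0 := sub_ne_zero.mpr (by exact_mod_cast h1)
  have hσ : ((k₁:ℂ) + (k₂:ℂ)) ≠ 0 := by
    intro h
    exact h2 (by exact_mod_cast (eq_neg_of_add_eq_zero_left h))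
  have hσr : k₁ + k₂ ≠ 0 := fun h => h2 (by linarith)
  have hgc : (g:ℂ) ≠ 0 := by exact_mod_cast hg.ne'
  have hsq : ((k₁:ℂ)^2 - (k₂:ℂ)^2) ≠ 0 := by
    rw [show ((k₁:ℂ)^2 - (k₂:ℂ)^2) = ((k₁:ℂ)-(k₂:ℂ))*((k₁:ℂ)+(k₂:ℂ)) by ring]
    exact mul_ne_zero hδ hσ
  set α : ℂ := (Complex.I * (g:ℂ)) / ((k₁:ℂ) - (k₂:ℂ)) with hα
  set β : ℂ := (Complex.I * (g:ℂ)) / ((k₁:ℂ) + (k₂:ℂ)) with hβ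
  set γc : ℂ := ((g:ℂ)^2) / ((k₁:ℂ)^2 - (k₂:ℂ)^2) with hγ
  have hP : (((k₁:ℂ)-(k₂:ℂ))^2 + (g:ℂ)^2) ≠ 0 := by
    have h : ((k₁:ℂ)-(k₂:ℂ))^2 + (g:ℂ)^2 = (((k₁ - k₂)^2 + g^2 : ℝ) : ℂ) := by
      push_cast; ring
    rw [h]
    exact_mod_cast (by positivity : ((k₁ - k₂)^2 + g^2 : ℝ) ≠ 0)
  have haux : α * β + γc = 0 := by
    rw [hα, hβ, hγ]
    field_simp
    linear_combination (g:ℂ)^2 * ((k₁:ℂ)^2 - (k₂:ℂ)^2) * Complex.I_sq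
  have hα2 : (1:ℂ) - α^2 ≠ 0 := by
    have h : (1:ℂ) - α^2 = (((k₁:ℂ)-(k₂:ℂ))^2 + (g:ℂ)^2)/(((k₁:ℂ)-(k₂:ℂ))^2) := by
      rw [hα]; field_simp; linear_combination (-(g:ℂ)^2) * Complex.I_sq
    rw [h]
    exact div_ne_zero hP (pow_ne_zero 2 hδ)
  have hQ : (((k₁:ℂ)+(k₂:ℂ)) + Complex.I*(g:ℂ)*(N:ℂ)) ≠ 0 := by
    intro h
    have h' := congrArg Complex.re h
    simp [Complex.add_re, Complex.mul_re] at h'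
    exact hσr (by linarith)
  have hβN : (1:ℂ) + β*(N:ℂ) ≠ 0 := by
    have hv : (1:ℂ) + β*(N:ℂ)
        = (((k₁:ℂ)+(k₂:ℂ)) + Complex.I*(g:ℂ)*(N:ℂ))/((k₁:ℂ)+(k₂:ℂ)) := by
      rw [hβ]; field_simp
    rw [hv]
    exact div_ne_zero hQ hσ
  have hc : (1 + β*(N:ℂ) - γc - α^2 - α*β + α*γc*(N:ℂ)) ≠ 0 := by
    have hval : (1 + β*(N:ℂ) - γc - α^2 - α*β + α*γc*(N:ℂ))
        = (1 - α^2)*(1 + β*(N:ℂ)) := by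
      linear_combination ((N:ℂ)*α - 1) * haux
    rw [hval]
    exact mul_ne_zero hα2 hβN
  -- named elements
  set T1 := ∑ p : Fin N, ∑ q : Fin N, M q p • b k₁ p q with hT1
  set T2 := ∑ p : Fin N, ∑ q : Fin N, M q p • b k₂ p q with hT2
  set u1 := ∑ p : Fin N, b k₁ p p with hu1
  set u2 := ∑ p : Fin N, b k₂ p p with hu2
  set S12 := ∑ p : Fin N, ∑ a : Fin N, b k₁ p a * b k₂ a p with hS12
  set S21 := ∑ p : Fin N, ∑ a : Fin N, b k₂ p a * b k₁ a p with hS21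
  set Q12 := ∑ p : Fin N, ∑ q : Fin N, M q p • (∑ a : Fin N, b k₁ p a * b k₂ a q) with hQ12
  set Q21 := ∑ p : Fin N, ∑ q : Fin N, M q p • (∑ a : Fin N, b k₂ p a * b k₁ a q) with hQ21
  set P12 := ∑ i : Fin N, ∑ j : Fin N, ∑ k : Fin N, ∑ l : Fin N,
      (M j i * M l k) • (b k₁ k j * b k₂ i l) with hP12
  set P21 := ∑ i : Fin N, ∑ j : Fin N, ∑ k : Fin N, ∑ l : Fin N,
      (M j i * M l k) • (b k₂ k j * b k₁ i l) with hP21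
  set m := ∑ i : Fin N, M i i with hm
  -- Equation 3 : trace-trace relation
  have eq3 : S12 - S21 = α • (u2 * u1 - u1 * u2) + β • ((N:ℂ) • (S21 - S12))
      - γc • (S21 - S12) := by
    have hK : ∀ p q : Fin N, (b k₁ p q * b k₂ q p - b k₂ q p * b k₁ p q)
        = α • (b k₂ q q * b k₁ p p - b k₁ q q * b k₂ p p)
          + β • ((∑ a, b k₂ q a * b k₁ a q) - (∑ a, b k₁ p a * b k₂ a p))
          - γc • (if p = q then ∑ a, (b k₂ q a * b k₁ a p - b k₁ q a * b k₂ a p) else 0) := by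
      intro p q
      rw [key p q q p]
      simp
    have hL : S12 - S21
        = ∑ p : Fin N, ∑ q : Fin N, (b k₁ p q * b k₂ q p - b k₂ q p * b k₁ p q) := by
      simp only [Finset.sum_sub_distrib]
      rw [hS12, hS21]
      congr 1
      exact Finset.sum_comm
    rw [hL]
    rw [Finset.sum_congr rfl fun p _ => Finset.sum_congr rfl fun q _ => hK p q]
    simp only [Finset.sum_add_distrib, Finset.sum_sub_distrib, ← Finset.smul_sum]
    congr 1
    congr 1
    · -- alpha piece
      congr 1
      rw [hu2, hu1]
      congr 1
      · rw [Finset.sum_mul_sum]; exact Finset.sum_comm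
      · rw [Finset.sum_mul_sum]; exact Finset.sum_comm
    · -- beta piece
      congr 1
      rw [smul_sub]
      congr 1
      · rw [Finset.sum_const, Finset.card_univ, Fintype.card_fin,
          Nat.cast_smul_eq_nsmul ℂ N]
      · rw [show (∑ p : Fin N, ∑ q : Fin N, ∑ a : Fin N, b k₁ p a * b k₂ a p)
            = ∑ p : Fin N, (N:ℂ) • (∑ a : Fin N, b k₁ p a * b k₂ a p) from
          Finset.sum_congr rfl fun p _ => by
            rw [Finset.sum_const, Finset.card_univ, Fintype.card_fin,
              Nat.cast_smul_eq_nsmul ℂ N],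
          ← Finset.smul_sum]
    · -- gamma piece
      congr 1
      simp only [Finset.sum_ite_eq, Finset.mem_univ, if_true]
      simp only [Finset.sum_sub_distrib]
      rw [hS21, hS12]
  -- Equation 4 : [u1,u2] relation
  have eq4 : u1 * u2 - u2 * u1 = α • (S21 - S12) + β • (S21 - S12)
      - γc • ((N:ℂ) • (S21 - S12)) := by
    have hK : ∀ p q : Fin N, (b k₁ p p * b k₂ q q - b k₂ q q * b k₁ p p)
        = α • (b k₂ q p * b k₁ p q - b k₁ q p * b k₂ p q)
          + β • ((if p = q then ∑ a, b k₂ q a * b k₁ a p else 0)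
              - (if q = p then ∑ a, b k₁ p a * b k₂ a q else 0))
          - γc • (∑ a, (b k₂ q a * b k₁ a q - b k₁ q a * b k₂ a q)) := by
      intro p q
      rw [key p p q q]
      simp
    have hL : u1 * u2 - u2 * u1
        = ∑ p : Fin N, ∑ q : Fin N, (b k₁ p p * b k₂ q q - b k₂ q q * b k₁ p p) := by
      simp only [Finset.sum_sub_distrib]
      rw [hu1, hu2]
      congr 1
      · rw [Finset.sum_mul_sum]
      · rw [Finset.sum_mul_sum]; exact Finset.sum_comm
    rw [hL]
    rw [Finset.sum_congr rfl fun p _ => Finset.sum_congr rfl fun q _ => hK p q]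
    simp only [Finset.sum_add_distrib, Finset.sum_sub_distrib, ← Finset.smul_sum]
    congr 1
    congr 1
    · -- alpha piece
      congr 1
      rw [hS21, hS12]
      congr 1
      · exact Finset.sum_comm
      · exact Finset.sum_comm
    · -- beta piece
      congr 1
      simp only [Finset.sum_ite_eq, Finset.sum_ite_eq', Finset.mem_univ, if_true]
      rw [hS21, hS12]
    · -- gamma piece
      congr 1
      rw [show (∑ p : Fin N, ∑ q : Fin N, ∑ a : Fin N, b k₂ q a * b k₁ a q)
          = ∑ _p : Fin N, S21 from Finset.sum_congr rfl fun p _ => hS21.symm,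
        show (∑ p : Fin N, ∑ q : Fin N, ∑ a : Fin N, b k₁ q a * b k₂ a q)
          = ∑ _p : Fin N, S12 from Finset.sum_congr rfl fun p _ => hS12.symm,
        Finset.sum_const, Finset.sum_const, Finset.card_univ, Fintype.card_fin,
        ← Nat.cast_smul_eq_nsmul ℂ N S21, ← Nat.cast_smul_eq_nsmul ℂ N S12,
        ← smul_sub]
  -- Equation 1 : commutator of the two transfer elements
  have eq1 : T1 * T2 - T2 * T1
      = α • (P21 - P12) + β • (S21 - S12) - γc • (m • (Q21 - Q12)) := by
    have hK : ∀ i j k l : Fin N,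
        (M j i * M l k) • (b k₁ i j * b k₂ k l - b k₂ k l * b k₁ i j)
        = α • ((M j i * M l k) • (b k₂ k j * b k₁ i l)
              - (M j i * M l k) • (b k₁ k j * b k₂ i l))
          + β • ((M j i * M l k) • (if i = l then ∑ a, b k₂ k a * b k₁ a j else 0)
              - (M j i * M l k) • (if k = j then ∑ a, b k₁ i a * b k₂ a l else 0))
          - γc • ((M j i * M l k) •
              (if i = j then ∑ a, (b k₂ k a * b k₁ a l - b k₁ k a * b k₂ a l) else 0)) := by
      intro i j k l
      rw [key i j k l]
      module
    have hL : T1 * T2 - T2 * T1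
        = ∑ i : Fin N, ∑ j : Fin N, ∑ k : Fin N, ∑ l : Fin N,
            (M j i * M l k) • (b k₁ i j * b k₂ k l - b k₂ k l * b k₁ i j) := by
      rw [hT1, hT2, sum4_factor (fun i j => M j i) (fun k l => M l k)
          (fun i j => b k₁ i j) (fun k l => b k₂ k l),
        sum4_factor' (fun i j => M j i) (fun k l => M l k)
          (fun i j => b k₂ i j) (fun k l => b k₁ k l)]
      simp only [← Finset.sum_sub_distrib, ← smul_sub]
    rw [hL, sum4_congr hK]
    simp only [Finset.sum_add_distrib, Finset.sum_sub_distrib, ← Finset.smul_sum]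
    congr 1
    congr 1
    · -- beta piece
      congr 1
      rw [deltaA M hM (fun k j => ∑ a, b k₂ k a * b k₁ a j),
        deltaB M hM (fun i l => ∑ a, b k₁ i a * b k₂ a l), hS21, hS12]
    · -- gamma piece
      congr 1
      rw [deltaC M (fun k l => (∑ a, b k₂ k a * b k₁ a l) - (∑ a, b k₁ k a * b k₂ a l)),
        hm, hQ21, hQ12]
      simp only [Finset.sum_sub_distrib, smul_sub]
  -- Equation 2 : relation for P12 - P21
  have eq2 : P12 - P21
      = α • (T2 * T1 - T1 * T2) + β • (m • (Q21 - Q12)) - γc • (S21 - S12) := by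
    have hK : ∀ i j k l : Fin N,
        (M j i * M l k) • (b k₁ i l * b k₂ k j - b k₂ k j * b k₁ i l)
        = α • ((M j i * M l k) • (b k₂ k l * b k₁ i j)
              - (M j i * M l k) • (b k₁ k l * b k₂ i j))
          + β • ((M j i * M l k) • (if i = j then ∑ a, b k₂ k a * b k₁ a l else 0)
              - (M j i * M l k) • (if k = l then ∑ a, b k₁ i a * b k₂ a j else 0))
          - γc • ((M j i * M l k) •
              (if i = l then ∑ a, (b k₂ k a * b k₁ a j - b k₁ k a * b k₂ a j) else 0)) := by
      intro i j k l
      rw [key i l k j]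
      module
    have hL : P12 - P21
        = ∑ i : Fin N, ∑ j : Fin N, ∑ k : Fin N, ∑ l : Fin N,
            (M j i * M l k) • (b k₁ i l * b k₂ k j - b k₂ k j * b k₁ i l) := by
      have l1 : P12 = ∑ i : Fin N, ∑ j : Fin N, ∑ k : Fin N, ∑ l : Fin N,
          (M j i * M l k) • (b k₁ i l * b k₂ k j) := by
        rw [hP12,
          sum4_swap (fun i j k l => (M j i * M l k) • (b k₁ i l * b k₂ k j))]
        exact sum4_congr fun i j k l => by rw [mul_comm (M j i) (M l k)]
      rw [l1, hP21]
      simp only [← Finset.sum_sub_distrib, ← smul_sub]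
    rw [hL, sum4_congr hK]
    simp only [Finset.sum_add_distrib, Finset.sum_sub_distrib, ← Finset.smul_sum]
    congr 1
    congr 1
    · -- alpha piece
      congr 1
      rw [hT2, hT1]
      congr 1
      · exact (sum4_factor' _ _ _ _).symm
      · exact (sum4_factor' _ _ _ _).symm
    · -- beta piece
      rw [deltaC M (fun k l => ∑ a, b k₂ k a * b k₁ a l),
        deltaD M (fun i j => ∑ a, b k₁ i a * b k₂ a j), hm, hQ21, hQ12, smul_sub,
        smul_sub, ← smul_sub]
    · -- gamma piece
      rw [deltaA M hM
        (fun k j => (∑ a, b k₂ k a * b k₁ a j) - (∑ a, b k₁ k a * b k₂ a j))]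
      congr 1
      simp only [Finset.sum_sub_distrib]
      rw [hS21, hS12]
  -- final assembly
  clear hT1 hT2 hu1 hu2 hS12 hS21 hQ12 hQ21 hP12 hP21 hm key hSR
  clear_value T1 T2 u1 u2 S12 S21 Q12 Q21 P12 P21 m
  have hD0 : S12 - S21 = 0 := by
    have hcomb : (1 + β*(N:ℂ) - γc - α^2 - α*β + α*γc*(N:ℂ)) • (S12 - S21) = 0 := by
      linear_combination (norm := module) eq3 - α • eq4
    have h := congrArg
      (fun z => (1 + β*(N:ℂ) - γc - α^2 - α*β + α*γc*(N:ℂ))⁻¹ • z) hcomb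
    simpa [smul_smul, inv_mul_cancel₀ hc] using h
  have hzW : (α*β + γc) • (m • (Q21 - Q12)) = 0 := by rw [haux, zero_smul]
  have hfin : ((1:ℂ) - α^2) • (T1*T2 - T2*T1) = 0 := by
    linear_combination (norm := module) eq1 - α • eq2 - (β + α*γc) • hD0 - hzW
  have hres := congrArg (fun z => ((1:ℂ) - α^2)⁻¹ • z) hfin
  simpa [smul_smul, inv_mul_cancel₀ hα2] using hres
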